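/- There do not exist a positive-edge-weighted tree T with four distinguished leaves a, b, c, d and reals 0 ≤ d_min ≤ d_max such that: d_min ≤ d_T(a,b) ≤ d_max, d_min ≤ d_T(b,c) ≤ d_max, d_min ≤ d_T(b,d) ≤ d_max, d_T(a,d) < d_min, d_T(c,d) < d_min, and d_T(a,c) > d_max. (Forbidden coloring f-c(K_{1,3}): the star with center b, non-edges (a,d) and (c,d) red and non-edge (a,c) blue, is not realizable.) -/

import Mathlib

open SimpleGraph

/-- A tree with positive real edge weights. -/
structure WTree (α : Type) where
  g : SimpleGraph α
  isTree : g.IsTree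
  w : α → α → ℝ
  w_symm : ∀ a b, w a b = w b a
  w_pos : ∀ a b, g.Adj a b → 0 < w a b

/-- The weighted distance between two vertices of a weighted tree: the sum of
the weights of the edges on the unique path between them. -/
noncomputable def WTree.dist {α : Type} (T : WTree α) (u v : α) : ℝ :=
  (((T.isTree.existsUnique_path u v).exists.choose).darts.map
    (fun d => T.w d.toProd.1 d.toProd.2)).sum

/-- A vertex of a weighted tree is a leaf if it has exactly one neighbor. -/
def WTree.IsLeaf {α : Type} (T : WTree α) (v : α) : Prop :=
  ∃! u, T.g.Adj v u

/-- `G = PCG(T, dmin, dmax)` via the leaf-assignment `f`. -/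
def IsPCGWith {V β : Type} (G : SimpleGraph V) (T : WTree β) (f : V → β)
    (dmin dmax : ℝ) : Prop :=
  Function.Injective f ∧ (∀ v, T.IsLeaf (f v)) ∧ (∀ b, T.IsLeaf b → ∃ v, f v = b) ∧
    ∀ u v : V, u ≠ v →
      (G.Adj u v ↔ dmin ≤ T.dist (f u) (f v) ∧ T.dist (f u) (f v) ≤ dmax)

/-- A graph is a pairwise compatibility graph. -/
def IsPCG {V : Type} (G : SimpleGraph V) : Prop :=
  ∃ (β : Type) (T : WTree β) (f : V → β) (dmin dmax : ℝ),
    0 ≤ dmin ∧ dmin ≤ dmax ∧ IsPCGWith G T f dmin dmax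

namespace WTree

variable {α : Type} (T : WTree α)

/-- The weight of a walk. -/
noncomputable def wt {u v : α} (p : T.g.Walk u v) : ℝ :=
  (p.darts.map (fun d => T.w d.toProd.1 d.toProd.2)).sum

@[simp] lemma wt_nil {u : α} : T.wt (Walk.nil : T.g.Walk u u) = 0 := by
  simp [wt]

lemma wt_cons {u v x : α} (h : T.g.Adj u v) (p : T.g.Walk v x) :
    T.wt (Walk.cons h p) = T.w u v + T.wt p := by
  simp [wt, Walk.darts_cons]

lemma wt_append {u v x : α} (p : T.g.Walk u v) (q : T.g.Walk v x) :
    T.wt (p.append q) = T.wt p + T.wt q := by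
  simp [wt, Walk.darts_append]

lemma wt_nonneg {u v : α} (p : T.g.Walk u v) : 0 ≤ T.wt p := by
  apply List.sum_nonneg
  intro a ha
  obtain ⟨d, _, rfl⟩ := List.mem_map.mp ha
  exact le_of_lt (T.w_pos _ _ d.adj)

lemma wt_reverse {u v : α} (p : T.g.Walk u v) : T.wt p.reverse = T.wt p := by
  simp only [wt, Walk.darts_reverse, List.map_reverse, List.sum_reverse, List.map_map]
  congr 1
  apply List.map_congr_left
  intro d _
  simp [Function.comp, Dart.symm, T.w_symm]

lemma dist_eq_wt {u v : α} (p : T.g.Walk u v) (hp : p.IsPath) : T.dist u v = T.wt p := by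
  have h1 : (T.isTree.existsUnique_path u v).exists.choose = p :=
    (T.isTree.existsUnique_path u v).unique
      (T.isTree.existsUnique_path u v).exists.choose_spec hp
  simp only [WTree.dist, h1]
  rfl

lemma dist_self (u : α) : T.dist u u = 0 := by
  rw [T.dist_eq_wt (Walk.nil : T.g.Walk u u) Walk.IsPath.nil, wt_nil]

lemma dist_symm (u v : α) : T.dist u v = T.dist v u := by
  obtain ⟨p, hp⟩ := (T.isTree.existsUnique_path u v).exists
  rw [T.dist_eq_wt p hp, T.dist_eq_wt p.reverse hp.reverse, wt_reverse]

lemma wt_bypass_le [DecidableEq α] {u v : α} (p : T.g.Walk u v) :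
    T.wt p.bypass ≤ T.wt p := by
  induction p with
  | nil => simp [Walk.bypass]
  | cons ha p ih =>
    simp only [Walk.bypass]
    split_ifs with hs
    · calc T.wt (p.bypass.dropUntil _ hs)
          ≤ T.wt (p.bypass.takeUntil _ hs) + T.wt (p.bypass.dropUntil _ hs) := by
            have := T.wt_nonneg (p.bypass.takeUntil _ hs); linarith
        _ = T.wt p.bypass := by rw [← T.wt_append, Walk.take_spec]
        _ ≤ T.wt p := ih
        _ ≤ T.wt (Walk.cons ha p) := by
            rw [wt_cons]; have := le_of_lt (T.w_pos _ _ ha); linarith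
    · rw [wt_cons, wt_cons]
      linarith [ih]

lemma dist_triangle (u v x : α) : T.dist u x ≤ T.dist u v + T.dist v x := by
  classical
  obtain ⟨p, hp⟩ := (T.isTree.existsUnique_path u v).exists
  obtain ⟨q, hq⟩ := (T.isTree.existsUnique_path v x).exists
  calc T.dist u x = T.wt (p.append q).bypass :=
        T.dist_eq_wt _ (Walk.bypass_isPath _)
    _ ≤ T.wt (p.append q) := T.wt_bypass_le _
    _ = T.dist u v + T.dist v x := by
        rw [wt_append, T.dist_eq_wt p hp, T.dist_eq_wt q hq]

lemma dist_nonneg (u v : α) : 0 ≤ T.dist u v := by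
  obtain ⟨p, hp⟩ := (T.isTree.existsUnique_path u v).exists
  rw [T.dist_eq_wt p hp]
  exact T.wt_nonneg p

/-- Splitting a distance at a vertex on the path. -/
lemma dist_add_of_mem [DecidableEq α] {u v : α} (p : T.g.Walk u v) (hp : p.IsPath)
    {m : α} (hm : m ∈ p.support) : T.dist u v = T.dist u m + T.dist m v := by
  have hsplit : T.wt p = T.wt (p.takeUntil m hm) + T.wt (p.dropUntil m hm) := by
    rw [← wt_append, Walk.take_spec]
  rw [T.dist_eq_wt p hp, hsplit, ← T.dist_eq_wt _ (hp.takeUntil hm),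
    ← T.dist_eq_wt _ (hp.dropUntil hm)]

/-- If two paths out of `x` diverge immediately, they share only the vertex `x`. -/
lemma eq_of_mem_both [DecidableEq α] {x y z c d : α} (h : T.g.Adj x y) (h' : T.g.Adj x z)
    (p' : T.g.Walk y c) (q' : T.g.Walk z d)
    (hp : (Walk.cons h p').IsPath) (hq : (Walk.cons h' q').IsPath) (hyz : y ≠ z)
    {v : α} (hv1 : v ∈ (Walk.cons h p').support) (hv2 : v ∈ (Walk.cons h' q').support) :
    v = x := by
  by_contra hvx
  have hP1 : ((Walk.cons h p').takeUntil v hv1).IsPath := hp.takeUntil hv1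
  have hP2 : ((Walk.cons h' q').takeUntil v hv2).IsPath := hq.takeUntil hv2
  have he : (Walk.cons h p').takeUntil v hv1 = (Walk.cons h' q').takeUntil v hv2 :=
    (T.isTree.existsUnique_path x v).unique hP1 hP2
  have hne1 : ((Walk.cons h p').takeUntil v hv1).darts ≠ [] := by
    intro hnil
    have hlen : ((Walk.cons h p').takeUntil v hv1).length = 0 := by
      rw [← Walk.length_darts, hnil]; rfl
    exact hvx (Walk.eq_of_length_eq_zero hlen).symm
  obtain ⟨d0, t, hdt⟩ := List.exists_cons_of_ne_nil hne1
  have h1 := congrArg Walk.darts (Walk.take_spec (Walk.cons h p') hv1)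
  rw [Walk.darts_append, hdt, Walk.darts_cons, List.cons_append] at h1
  have h2 := congrArg Walk.darts (Walk.take_spec (Walk.cons h' q') hv2)
  rw [Walk.darts_append, ← he, hdt, Walk.darts_cons, List.cons_append] at h2
  have hy : d0 = (⟨(x, y), h⟩ : T.g.Dart) := by
    injection h1 with h1a _
  have hz : d0 = (⟨(x, z), h'⟩ : T.g.Dart) := by
    injection h2 with h2a _
  exact hyz (congrArg (fun d : T.g.Dart => d.toProd.2) (hy.symm.trans hz))

/-- Median of a triple with apex `x`: it lies on the given path from `x` to `c`. -/
lemma exists_median : ∀ {x c : α} (p : T.g.Walk x c) {d : α} (q : T.g.Walk x d),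
    p.IsPath → q.IsPath →
      ∃ m, m ∈ p.support ∧ T.dist x c = T.dist x m + T.dist m c ∧
        T.dist x d = T.dist x m + T.dist m d ∧
        T.dist c d = T.dist c m + T.dist m d := by
  classical
  intro x c p
  induction p with
  | nil =>
    intro d q _ _
    refine ⟨_, Walk.start_mem_support _, ?_, ?_, ?_⟩ <;> simp [T.dist_self]
  | @cons x y c h p' ih =>
    intro d q hp hq
    cases q with
    | nil =>
      refine ⟨x, Walk.start_mem_support _, ?_, ?_, ?_⟩ <;> simp [T.dist_self]
    | @cons _ z _ h' q' =>
      by_cases hyz : y = z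
      · subst hyz
        obtain ⟨m, hm, e1, e2, e3⟩ := ih q' hp.of_cons hq.of_cons
        have hxp' : x ∉ p'.support := ((Walk.cons_isPath_iff _ _).mp hp).2
        have hxm : (Walk.cons h (p'.takeUntil m hm)).IsPath :=
          Walk.IsPath.cons (hp.of_cons.takeUntil hm)
            (fun hc => hxp' (Walk.support_takeUntil_subset _ hm hc))
        have dxm : T.dist x m = T.w x y + T.dist y m := by
          rw [T.dist_eq_wt _ hxm, wt_cons, T.dist_eq_wt _ (hp.of_cons.takeUntil hm)]
        have dxc : T.dist x c = T.w x y + T.dist y c := by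
          rw [T.dist_eq_wt _ hp, wt_cons, T.dist_eq_wt p' hp.of_cons]
        have dxd : T.dist x d = T.w x y + T.dist y d := by
          rw [T.dist_eq_wt _ hq, wt_cons, T.dist_eq_wt q' hq.of_cons]
        refine ⟨m, ?_, ?_, ?_, ?_⟩
        · rw [Walk.support_cons]; exact List.mem_cons_of_mem _ hm
        · rw [dxc, dxm, e1]; ring
        · rw [dxd, dxm, e2]; ring
        · exact e3
      · -- the two walks diverge at x
        refine ⟨x, Walk.start_mem_support _, by simp [T.dist_self], by simp [T.dist_self], ?_⟩
        have hpath : ((Walk.cons h p').reverse.append (Walk.cons h' q')).IsPath := by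
          rw [Walk.isPath_def, Walk.support_append]
          apply List.Nodup.append
          · rw [Walk.support_reverse]
            exact List.nodup_reverse.mpr hp.support_nodup
          · have := hq.support_nodup
            rw [Walk.support_eq_cons] at this
            exact this.of_cons
          · intro v hv hv'
            have hv1 : v ∈ (Walk.cons h p').support := by
              rw [Walk.support_reverse] at hv
              exact List.mem_reverse.mp hv
            have hv2 : v ∈ (Walk.cons h' q').support := List.mem_of_mem_tail hv'
            have hvx : v = x := T.eq_of_mem_both h h' p' q' hp hq hyz hv1 hv2
            have := hq.support_nodup
            rw [Walk.support_eq_cons] at this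
            exact (List.nodup_cons.mp this).1 (hvx ▸ hv')
        have e : T.dist c d = T.wt ((Walk.cons h p').reverse.append (Walk.cons h' q')) :=
          T.dist_eq_wt _ hpath
        rw [wt_append, wt_reverse, ← T.dist_eq_wt _ hp, ← T.dist_eq_wt _ hq] at e
        rw [e, T.dist_symm]

/-- Two vertices on a common path are "collinear". -/
lemma collinear {a c : α} (p : T.g.Walk a c) (hp : p.IsPath) {m1 m2 : α}
    (h1 : m1 ∈ p.support) (h2 : m2 ∈ p.support) :
    T.dist a m2 = T.dist a m1 + T.dist m1 m2 ∨
      T.dist a m1 = T.dist a m2 + T.dist m2 m1 := by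
  classical
  have h2' : m2 ∈ (p.takeUntil m1 h1).support ∨ m2 ∈ (p.dropUntil m1 h1).support := by
    rw [← Walk.mem_support_append_iff, Walk.take_spec]
    exact h2
  rcases h2' with h2' | h2'
  · right
    exact T.dist_add_of_mem _ (hp.takeUntil h1) h2'
  · left
    set t := p.takeUntil m1 h1 with ht
    set dr := p.dropUntil m1 h1 with hdr
    have hwalk : (t.append (dr.takeUntil m2 h2')).IsPath := by
      rw [Walk.isPath_def, Walk.support_append]
      have hsub : List.Sublist (dr.takeUntil m2 h2').support.tail dr.support.tail := by
        have hspec := congrArg Walk.support (Walk.take_spec dr h2')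
        rw [Walk.support_append] at hspec
        have e1 : dr.support.tail =
            (dr.takeUntil m2 h2').support.tail ++ (dr.dropUntil m2 h2').support.tail := by
          have := hspec
          rw [Walk.support_eq_cons dr, Walk.support_eq_cons (dr.takeUntil m2 h2')] at this
          have h3 := congrArg List.tail this
          simp only [List.cons_append, List.tail_cons] at h3
          exact h3.symm
        rw [e1]
        exact List.sublist_append_left _ _
      have hsub2 : List.Sublist (t.support ++ (dr.takeUntil m2 h2').support.tail)
          p.support := by
        have e2 : t.support ++ dr.support.tail = p.support := by
          rw [← Walk.support_append, Walk.take_spec]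
        exact e2 ▸ hsub.append_left t.support
      exact hp.support_nodup.sublist hsub2
    have := T.dist_eq_wt _ hwalk
    rw [wt_append, ← T.dist_eq_wt _ (hp.takeUntil h1),
      ← T.dist_eq_wt _ ((hp.dropUntil h1).takeUntil h2')] at this
    exact this

end WTree

theorem forbidden_K13 : ¬ ∃ (β : Type) (T : WTree β) (a b c d : β) (dmin dmax : ℝ),
    T.IsLeaf a ∧ T.IsLeaf b ∧ T.IsLeaf c ∧ T.IsLeaf d ∧
    a ≠ b ∧ a ≠ c ∧ a ≠ d ∧ b ≠ c ∧ b ≠ d ∧ c ≠ d ∧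
    0 ≤ dmin ∧ dmin ≤ dmax ∧
    dmin ≤ T.dist a b ∧ T.dist a b ≤ dmax ∧
    dmin ≤ T.dist b c ∧ T.dist b c ≤ dmax ∧
    dmin ≤ T.dist b d ∧ T.dist b d ≤ dmax ∧
    T.dist a d < dmin ∧ T.dist c d < dmin ∧
    dmax < T.dist a c := by
  rintro ⟨β, T, a, b, c, d, dmin, dmax, -, -, -, -, -, -, -, -, -, -, h0, h1,
    hab1, hab2, hbc1, hbc2, hbd1, hbd2, had, hcd, hac⟩
  classical
  obtain ⟨p, hp⟩ := (T.isTree.existsUnique_path a c).exists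
  obtain ⟨q, hq⟩ := (T.isTree.existsUnique_path a d).exists
  obtain ⟨r, hr⟩ := (T.isTree.existsUnique_path a b).exists
  obtain ⟨m1, hm1, e1, e2, e3⟩ := T.exists_median p q hp hq
  obtain ⟨m2, hm2, f1, f2, f3⟩ := T.exists_median p r hp hr
  have tri1 : T.dist b d ≤ T.dist b m2 + T.dist m2 d := T.dist_triangle b m2 d
  have tri2 : T.dist m2 d ≤ T.dist m2 m1 + T.dist m1 d := T.dist_triangle m2 m1 d
  have s1 : T.dist c m1 = T.dist m1 c := T.dist_symm c m1
  have s2 : T.dist m2 m1 = T.dist m1 m2 := T.dist_symm m2 m1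
  have s3 : T.dist b m2 = T.dist m2 b := T.dist_symm b m2
  have s4 : T.dist b c = T.dist c b := T.dist_symm b c
  have s5 : T.dist c m2 = T.dist m2 c := T.dist_symm c m2
  rcases T.collinear p hp hm1 hm2 with hco | hco
  · -- order a, m1, m2 along the path: use d(a,c)+d(b,d) ≤ d(a,b)+d(c,d)
    linarith
  · -- order a, m2, m1 along the path: use d(a,c)+d(b,d) ≤ d(a,d)+d(b,c)
    linarith
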